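/- A clause γ ∈ Π is conditionally irredundant in Π if and only if there exist assignments ω, ω' with S_Π(ω) \ S_Π(ω') = {γ}. -/

import Mathlib

open scoped Classical

abbrev Clause := Finset (ℕ × Bool)
abbrev Assignment := ℕ → Bool

/-- An assignment satisfies a clause iff it makes some literal true. -/
def satC (ω : Assignment) (c : Clause) : Prop := ∃ l ∈ c, ω l.1 = l.2

/-- An assignment satisfies a CNF (finite set of clauses). -/
def satF (ω : Assignment) (P : Finset Clause) : Prop := ∀ c ∈ P, satC ω c

/-- A CNF entails a clause. -/
def entails (P : Finset Clause) (γ : Clause) : Prop := ∀ ω, satF ω P → satC ω γ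

/-- Two CNFs are (logically) equivalent: same models. -/
def equivF (P Q : Finset Clause) : Prop := ∀ ω, satF ω P ↔ satF ω Q

/-- A clause is non-tautological. -/
def nonTaut (c : Clause) : Prop := ∀ v, ¬((v, true) ∈ c ∧ (v, false) ∈ c)

/-- A CNF is redundant: it is equivalent to a proper subset. -/
def redundantF (P : Finset Clause) : Prop := ∃ Q ⊂ P, equivF Q P

/-- A CNF is irredundant: no clause is entailed by the others. -/
def irredundant (P : Finset Clause) : Prop := ∀ γ ∈ P, ¬ entails (P.erase γ) γ

/-- Q is an irredundant equivalent subset (IES) of P. -/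
def IES (P Q : Finset Clause) : Prop := Q ⊆ P ∧ equivF Q P ∧ irredundant Q

/-- A set of clauses is consistent with a formula Γ. -/
def consistentWith (Q : Finset Clause) (Γ : Assignment → Prop) : Prop :=
  ∃ ω, Γ ω ∧ satF ω Q

/-- Q is a maximal subset of P consistent with Γ. -/
def maxCons (P : Finset Clause) (Γ : Assignment → Prop) (Q : Finset Clause) : Prop :=
  Q ⊆ P ∧ consistentWith Q Γ ∧ ∀ R, Q ⊂ R → R ⊆ P → ¬ consistentWith R Γ

/-- ω is a model of the revision P * Γ = ⋁_{Q ∈ Max(P,Γ)} (⋀Q ∧ Γ). -/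
def revSat (P : Finset Clause) (Γ : Assignment → Prop) (ω : Assignment) : Prop :=
  ∃ Q, maxCons P Γ Q ∧ Γ ω ∧ satF ω Q

/-- S_P(ω): the clauses of P satisfied by ω. -/
noncomputable def SP (P : Finset Clause) (ω : Assignment) : Finset Clause :=
  P.filter fun γ => satC ω γ

/-- Conditional (strong) equivalence: same result under every revision. -/
def condEquiv (P P' : Finset Clause) : Prop :=
  ∀ Γ : Assignment → Prop, ∀ ω, revSat P Γ ω ↔ revSat P' Γ ω

lemma mem_SP {P : Finset Clause} {ω : Assignment} {c : Clause} :
    c ∈ SP P ω ↔ c ∈ P ∧ satC ω c := Finset.mem_filter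

lemma SP_subset {P : Finset Clause} {ω : Assignment} : SP P ω ⊆ P :=
  Finset.filter_subset _ _

lemma satF_SP {P : Finset Clause} {ω : Assignment} : satF ω (SP P ω) :=
  fun _ hc => (mem_SP.mp hc).2

lemma satF_iff_subset_SP {P Q : Finset Clause} {ω : Assignment} (hQ : Q ⊆ P) :
    satF ω Q ↔ Q ⊆ SP P ω := by
  constructor
  · intro h c hc; exact mem_SP.mpr ⟨hQ hc, h c hc⟩
  · intro h c hc; exact (mem_SP.mp (h hc)).2

lemma SP_erase (P : Finset Clause) (γ : Clause) (ω : Assignment) :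
    SP (P.erase γ) ω = (SP P ω).erase γ := by
  simp [SP, Finset.filter_erase]

lemma maxCons_iff {P : Finset Clause} {Γ : Assignment → Prop} {Q : Finset Clause} :
    maxCons P Γ Q ↔
      (∃ α, Γ α ∧ Q = SP P α) ∧ ∀ β, Γ β → Q ⊆ SP P β → SP P β = Q := by
  constructor
  · rintro ⟨hQP, ⟨α, hα, hsat⟩, hmax⟩
    have hQS : Q ⊆ SP P α := (satF_iff_subset_SP hQP).mp hsat
    have key : ∀ β, Γ β → Q ⊆ SP P β → SP P β = Q := by
      intro β hβ hsub
      by_contra hne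
      have hss : Q ⊂ SP P β := hsub.ssubset_of_ne (Ne.symm hne)
      exact hmax _ hss SP_subset ⟨β, hβ, satF_SP⟩
    exact ⟨⟨α, hα, (key α hα hQS).symm⟩, key⟩
  · rintro ⟨⟨α, hα, rfl⟩, hmax⟩
    refine ⟨SP_subset, ⟨α, hα, satF_SP⟩, ?_⟩
    rintro R hss hRP ⟨β, hβ, hsat⟩
    have hRS : R ⊆ SP P β := (satF_iff_subset_SP hRP).mp hsat
    have := hmax β hβ (hss.subset.trans hRS)
    exact hss.not_subset (hRS.trans this.le)

lemma exists_max (P : Finset Clause) (Γ : Assignment → Prop) {α : Assignment} (hα : Γ α) :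
    ∃ β, Γ β ∧ SP P α ⊆ SP P β ∧ ∀ η, Γ η → SP P β ⊆ SP P η → SP P η = SP P β := by
  set s : Set (Finset Clause) := {S | (∃ β, Γ β ∧ S = SP P β) ∧ SP P α ⊆ S} with hs
  have hfin : s.Finite := by
    apply Set.Finite.subset P.powerset.finite_toSet
    rintro S ⟨⟨β, hβ, rfl⟩, -⟩
    simpa [Finset.mem_powerset] using SP_subset (P := P) (ω := β)
  have hne : s.Nonempty := ⟨SP P α, ⟨α, hα, rfl⟩, subset_rfl⟩
  obtain ⟨M, hM, hmax⟩ := Set.Finite.exists_maximalFor id s hfin hne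
  obtain ⟨⟨β, hβ, rfl⟩, hsub⟩ := hM
  refine ⟨β, hβ, hsub, ?_⟩
  intro η hη hsubη
  exact le_antisymm (hmax (j := SP P η) ⟨⟨η, hη, rfl⟩, hsub.trans hsubη⟩ hsubη) hsubη

lemma star {P : Finset Clause} {γ : Clause} (hγ : γ ∈ P)
    (H : ∀ ω ω' : Assignment, SP P ω \ SP P ω' ≠ {γ}) :
    ∀ α β : Assignment, satC α γ → (SP P α).erase γ ⊆ SP P β → satC β γ := by
  intro α β hα hsub
  by_contra hβ
  apply H α β
  apply Finset.Subset.antisymm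
  · intro x hx
    rw [Finset.mem_sdiff] at hx
    rw [Finset.mem_singleton]
    by_contra hxγ
    exact hx.2 (hsub (Finset.mem_erase.mpr ⟨hxγ, hx.1⟩))
  · intro x hx
    rw [Finset.mem_singleton] at hx; subst hx
    rw [Finset.mem_sdiff, mem_SP, mem_SP]
    exact ⟨⟨hγ, hα⟩, fun h => hβ h.2⟩

lemma condEquiv_of {P : Finset Clause} {γ : Clause} (hγ : γ ∈ P)
    (H : ∀ ω ω' : Assignment, SP P ω \ SP P ω' ≠ {γ}) : condEquiv P (P.erase γ) := by
  have hst := star hγ H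
  intro Γ ω
  constructor
  · rintro ⟨Q, hmc, hΓω, hsat⟩
    obtain ⟨⟨α, hα, rfl⟩, hmax⟩ := maxCons_iff.mp hmc
    refine ⟨(SP P α).erase γ,
      maxCons_iff.mpr ⟨⟨α, hα, (SP_erase P γ α).symm⟩, ?_⟩, hΓω,
      fun c hc => hsat c (Finset.erase_subset _ _ hc)⟩
    intro β hβ hsubset
    rw [SP_erase] at hsubset ⊢
    have hab : (SP P α).erase γ ⊆ SP P β :=
      hsubset.trans (Finset.erase_subset _ _)
    by_cases hg : satC α γ
    · have hgβ : satC β γ := hst α β hg hab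
      have hAB : SP P α ⊆ SP P β := by
        intro x hx
        by_cases hxγ : x = γ
        · subst hxγ; exact mem_SP.mpr ⟨hγ, hgβ⟩
        · exact hab (Finset.mem_erase.mpr ⟨hxγ, hx⟩)
      rw [hmax β hβ hAB]
    · have hγα : γ ∉ SP P α := fun h => hg (mem_SP.mp h).2
      rw [Finset.erase_eq_of_notMem hγα] at hab
      rw [hmax β hβ hab]
  · rintro ⟨Q, hmc, hΓω, hsat⟩
    obtain ⟨⟨β₀, hβ₀, rfl⟩, hmax'⟩ := maxCons_iff.mp hmc
    have hQP : SP (P.erase γ) β₀ ⊆ P := SP_subset.trans (Finset.erase_subset _ _)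
    have hQW : SP (P.erase γ) β₀ ⊆ SP P ω := (satF_iff_subset_SP hQP).mp hsat
    obtain ⟨β₁, hβ₁, hWT, hTmax⟩ := exists_max P Γ hΓω
    have h1 : SP (P.erase γ) β₀ ⊆ SP (P.erase γ) β₁ := by
      rw [SP_erase P γ β₀, SP_erase P γ β₁]
      intro x hx
      obtain ⟨hxγ, hxm⟩ := Finset.mem_erase.mp hx
      refine Finset.mem_erase.mpr ⟨hxγ, hWT (hQW ?_)⟩
      rw [SP_erase]; exact hx
    have h2 : SP (P.erase γ) β₁ = SP (P.erase γ) β₀ := hmax' β₁ hβ₁ h1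
    have hTW : (SP P β₁).erase γ ⊆ SP P ω := by
      rw [← SP_erase, h2]; exact hQW
    have hT_sub : SP P β₁ ⊆ SP P ω := by
      intro x hx
      by_cases hxγ : x = γ
      · have hsγ : satC β₁ γ := (mem_SP.mp (hxγ ▸ hx)).2
        rw [hxγ]
        exact mem_SP.mpr ⟨hγ, hst β₁ ω hsγ hTW⟩
      · exact hTW (Finset.mem_erase.mpr ⟨hxγ, hx⟩)
    have hWeq : SP P β₁ = SP P ω := Finset.Subset.antisymm hT_sub hWT
    refine ⟨SP P ω, maxCons_iff.mpr ⟨⟨ω, hΓω, rfl⟩, ?_⟩, hΓω, satF_SP⟩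
    intro η hη hsub
    rw [← hWeq] at hsub ⊢
    exact hTmax η hη hsub

/-- γ ∈ P is conditionally irredundant in P iff there are assignments ω, ω'
with S_P(ω) \ S_P(ω') = {γ}. -/
theorem condIrredundant_iff_diff_singleton (P : Finset Clause) (γ : Clause) (hγ : γ ∈ P) :
    ¬ condEquiv P (P.erase γ) ↔
      ∃ ω ω' : Assignment, SP P ω \ SP P ω' = {γ} := by
  constructor
  · intro hne
    by_contra hno
    push_neg at hno
    exact hne (condEquiv_of hγ hno)
  · rintro ⟨ω, ω', hdiff⟩ hce
    have hγω : γ ∈ SP P ω := by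
      have : γ ∈ SP P ω \ SP P ω' := by rw [hdiff]; exact Finset.mem_singleton_self γ
      exact (Finset.mem_sdiff.mp this).1
    have hγω' : γ ∉ SP P ω' := by
      have : γ ∈ SP P ω \ SP P ω' := by rw [hdiff]; exact Finset.mem_singleton_self γ
      exact (Finset.mem_sdiff.mp this).2
    have hsub : (SP P ω).erase γ ⊆ SP P ω' := by
      intro x hx
      obtain ⟨hxγ, hxW⟩ := Finset.mem_erase.mp hx
      by_contra hxW'
      have : x ∈ SP P ω \ SP P ω' := Finset.mem_sdiff.mpr ⟨hxW, hxW'⟩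
      rw [hdiff, Finset.mem_singleton] at this
      exact hxγ this
    set Γ : Assignment → Prop := fun α => α = ω ∨ α = ω' with hΓ
    by_cases hB : SP P ω' ⊆ SP P ω
    · -- Case A: revSat (P.erase γ) Γ ω' holds but revSat P Γ ω' fails
      have hW'eq : (SP P ω).erase γ = SP P ω' := by
        apply Finset.Subset.antisymm hsub
        intro x hx
        exact Finset.mem_erase.mpr ⟨fun h => hγω' (h ▸ hx), hB hx⟩
      have hrev' : revSat (P.erase γ) Γ ω' := by
        refine ⟨SP (P.erase γ) ω', maxCons_iff.mpr ⟨⟨ω', Or.inr rfl, rfl⟩, ?_⟩,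
          Or.inr rfl, satF_SP⟩
        rintro β (rfl | rfl) hsubβ
        · rw [SP_erase, SP_erase, hW'eq, Finset.erase_eq_of_notMem hγω']
        · rfl
      have hrev : revSat P Γ ω' := (hce Γ ω').mpr hrev'
      obtain ⟨Q, hmc, -, hsat⟩ := hrev
      obtain ⟨⟨α, hα, rfl⟩, hmax⟩ := maxCons_iff.mp hmc
      have hQW : SP P α ⊆ SP P ω := by
        rcases hα with rfl | rfl
        · exact subset_rfl
        · exact hB
      have hQeq : SP P ω = SP P α := hmax ω (Or.inl rfl) hQW
      have : satC ω' γ := hsat γ (hQeq ▸ hγω)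
      exact hγω' (mem_SP.mpr ⟨hγ, this⟩)
    · -- Case B: revSat P Γ ω holds but revSat (P.erase γ) Γ ω fails
      obtain ⟨δ, hδW', hδW⟩ := Finset.not_subset.mp hB
      have hrev : revSat P Γ ω := by
        refine ⟨SP P ω, maxCons_iff.mpr ⟨⟨ω, Or.inl rfl, rfl⟩, ?_⟩, Or.inl rfl, satF_SP⟩
        rintro β (rfl | rfl) hsubβ
        · rfl
        · exact absurd (hsubβ hγω) hγω'
      have hrev' : revSat (P.erase γ) Γ ω := (hce Γ ω).mp hrev
      obtain ⟨Q, hmc, -, hsat⟩ := hrev'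
      obtain ⟨⟨α, hα, rfl⟩, hmax⟩ := maxCons_iff.mp hmc
      have hQW' : SP (P.erase γ) α ⊆ SP (P.erase γ) ω' := by
        rcases hα with rfl | rfl
        · rw [SP_erase, SP_erase]
          exact fun x hx => Finset.mem_erase.mpr
            ⟨(Finset.mem_erase.mp hx).1, hsub hx⟩
        · exact subset_rfl
      have hQeq : SP (P.erase γ) ω' = SP (P.erase γ) α := hmax ω' (Or.inr rfl) hQW'
      have hδQ : δ ∈ SP (P.erase γ) α := by
        rw [← hQeq, SP_erase]
        exact Finset.mem_erase.mpr ⟨fun h => hγω' (h ▸ hδW'), hδW'⟩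
      have : satC ω δ := hsat δ hδQ
      exact hδW (mem_SP.mpr ⟨(mem_SP.mp hδW').1, this⟩)
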